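/- Under the same hypotheses (Ω bounded strictly convex, φ a C² defining function, f = -log φ), if x_k, y_k ∈ Ω with x_k → x₀ ∈ ∂Ω, y_k → y₀ ∈ ∂Ω and x₀ ≠ y₀, then E_f(x_k, y_k) → +∞. -/

import Mathlib

open Filter Set Topology

noncomputable def segEf {n : ℕ} (f : EuclideanSpace ℝ (Fin n) → ℝ)
    (x y : EuclideanSpace ℝ (Fin n)) : ℝ :=
  ∫ s in (0:ℝ)..‖y - x‖,
    iteratedFDeriv ℝ 2 f (x + s • (‖y - x‖⁻¹ • (y - x)))
      ![‖y - x‖⁻¹ • (y - x), ‖y - x‖⁻¹ • (y - x)]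

section Aux

variable {n : ℕ}

local notation "E" => EuclideanSpace ℝ (Fin n)

/-- positivity of the boundary directional derivative into the domain -/
lemma aux_deriv_pos {Ω : Set E} (hconv : Convex ℝ Ω)
    {φ : E → ℝ}
    (hφnn : ∀ z ∈ closure Ω, 0 ≤ φ z)
    (hdiffcl : ∀ z ∈ closure Ω, DifferentiableAt ℝ φ z)
    (hstrict : ∀ x ∈ frontier Ω, ∀ X : E, X ≠ 0 →
      fderiv ℝ φ x X = 0 → iteratedFDeriv ℝ 2 φ x ![X, X] < 0)
    {p v : E} (hp : p ∈ frontier Ω) (hφp : φ p = 0) (hv : v ≠ 0)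
    (hpv : p + v ∈ closure Ω) :
    0 < fderiv ℝ φ p v := by
  have hpcl : p ∈ closure Ω := frontier_subset_closure hp
  have hseg : ∀ t ∈ Icc (0:ℝ) 1, p + t • v ∈ closure Ω := by
    intro t ht
    have := hconv.closure.add_smul_sub_mem hpcl hpv ht
    simpa using this
  have hline : ∀ t : ℝ, HasDerivAt (fun t : ℝ => p + t • v) v t := by
    intro t
    simpa using ((hasDerivAt_id t).smul_const v).const_add p
  have hg' : ∀ t : ℝ, p + t • v ∈ closure Ω →
      HasDerivAt (fun t => φ (p + t • v)) (fderiv ℝ φ (p + t • v) v) t := by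
    intro t ht
    exact (hdiffcl _ ht).hasFDerivAt.comp_hasDerivAt t (hline t)
  have hp0 : p + (0:ℝ) • v = p := by simp
  have hda : HasDerivAt (fun t => φ (p + t • v)) (fderiv ℝ φ p v) (0:ℝ) := by
    have := hg' 0 (by simpa [hp0] using hpcl)
    rwa [hp0] at this
  -- right derivative is nonneg
  have hmono : 𝓝[>] (0:ℝ) ≤ 𝓝[≠] (0:ℝ) :=
    nhdsWithin_mono _ (fun t ht => ne_of_gt ht)
  have haux : ∀ᶠ t in 𝓝[>] (0:ℝ), t ∈ Ioc (0:ℝ) 1 :=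
    Ioc_mem_nhdsGT_of_mem ⟨le_refl 0, zero_lt_one⟩
  have ha0 : 0 ≤ fderiv ℝ φ p v := by
    have hslope : Tendsto (slope (fun t => φ (p + t • v)) (0:ℝ)) (𝓝[>] 0)
        (𝓝 (fderiv ℝ φ p v)) :=
      (hasDerivAt_iff_tendsto_slope.1 hda).mono_left hmono
    refine ge_of_tendsto hslope ?_
    filter_upwards [haux, self_mem_nhdsWithin] with t ht ht'
    have h1 : 0 ≤ φ (p + t • v) := hφnn _ (hseg t ⟨le_of_lt ht.1, ht.2⟩)
    have : slope (fun t => φ (p + t • v)) (0:ℝ) t = φ (p + t • v) / t := by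
      simp [slope_def_field, hp0, hφp]
    rw [this]
    exact div_nonneg h1 (le_of_lt ht.1)
  rcases lt_or_eq_of_le ha0 with h | h
  · exact h
  exfalso
  -- the degenerate case : use strict convexity
  have ha : fderiv ℝ φ p v = 0 := h.symm
  have hQ := hstrict p hp v hv ha
  set Q := iteratedFDeriv ℝ 2 φ p ![v, v] with hQdef
  have hQeq : Q = fderiv ℝ (fderiv ℝ φ) p v v := by
    rw [hQdef, iteratedFDeriv_two_apply]
    simp
  have hd2 : DifferentiableAt ℝ (fderiv ℝ φ) p := by
    by_contra hcon
    rw [hQeq, fderiv_zero_of_not_differentiableAt hcon] at hQ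
    simp at hQ
  -- the function h t = fderiv φ (p + t v) v has derivative Q at 0
  have h1 : HasDerivAt (fun t : ℝ => fderiv ℝ φ (p + t • v))
      (fderiv ℝ (fderiv ℝ φ) p v) (0:ℝ) := by
    have hF := hd2.hasFDerivAt
    rw [← hp0] at hF
    have := hF.comp_hasDerivAt (0:ℝ) (hline 0)
    simpa [hp0, Function.comp_def] using this
  have h2 : HasDerivAt (fun t : ℝ => fderiv ℝ φ (p + t • v) v) Q (0:ℝ) := by
    have := ((ContinuousLinearMap.apply ℝ ℝ v).hasFDerivAt).comp_hasDerivAt (0:ℝ) h1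
    simpa [hQeq, Function.comp_def] using this
  have hh0 : fderiv ℝ φ (p + (0:ℝ) • v) v = 0 := by rw [hp0, ha]
  -- eventually (fderiv φ (p+t v)) v < 0 for small positive t
  have hneg : ∀ᶠ t in 𝓝[>] (0:ℝ), fderiv ℝ φ (p + t • v) v < 0 := by
    have hslope : Tendsto (slope (fun t => fderiv ℝ φ (p + t • v) v) (0:ℝ)) (𝓝[>] 0) (𝓝 Q) :=
      (hasDerivAt_iff_tendsto_slope.1 h2).mono_left hmono
    filter_upwards [hslope.eventually_lt_const hQ, self_mem_nhdsWithin] with t hts ht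
    have : slope (fun t => fderiv ℝ φ (p + t • v) v) (0:ℝ) t
        = fderiv ℝ φ (p + t • v) v / t := by
      simp [slope_def_field, hh0, ha]
    rw [this] at hts
    have ht0 : (0:ℝ) < t := ht
    by_contra hcon
    push_neg at hcon
    have : 0 ≤ fderiv ℝ φ (p + t • v) v / t := div_nonneg hcon ht0.le
    linarith
  -- extract an interval
  rcases (mem_nhdsGT_iff_exists_Ioo_subset).1 hneg with ⟨b, hb, hsub⟩
  have hb0 : (0:ℝ) < b := hb
  set t := min b 1 / 2 with htdef
  have ht0 : 0 < t := by positivity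
  have htb : t < b := by
    have : t < min b 1 := by
      rw [htdef]
      exact half_lt_self (by positivity)
    exact lt_of_lt_of_le this (min_le_left _ _)
  have ht1 : t ≤ 1 := le_trans (le_of_lt (lt_of_lt_of_le
    (by rw [htdef]; exact half_lt_self (by positivity)) (min_le_right b 1))) (le_refl 1)
  -- MVT on [0, t]
  have hcontg : ContinuousOn (fun s => φ (p + s • v)) (Icc 0 t) := by
    intro s hs
    have hs' : s ∈ Icc (0:ℝ) 1 := ⟨hs.1, le_trans hs.2 ht1⟩
    exact ((hg' s (hseg s hs')).continuousAt).continuousWithinAt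
  have hderivg : ∀ s ∈ Ioo (0:ℝ) t, HasDerivAt (fun s => φ (p + s • v))
      (fderiv ℝ φ (p + s • v) v) s := by
    intro s hs
    exact hg' s (hseg s ⟨hs.1.le, le_trans hs.2.le ht1⟩)
  obtain ⟨c, hc, hceq⟩ := exists_hasDerivAt_eq_slope (fun s => φ (p + s • v))
    (fun s => fderiv ℝ φ (p + s • v) v) ht0 hcontg hderivg
  have hcneg : fderiv ℝ φ (p + c • v) v < 0 := hsub ⟨hc.1, lt_trans hc.2 htb⟩
  have hgt : 0 ≤ φ (p + t • v) := hφnn _ (hseg t ⟨ht0.le, ht1⟩)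
  rw [hceq] at hcneg
  have : (φ (p + t • v) - φ (p + (0:ℝ) • v)) / (t - 0) < 0 := hcneg
  rw [hp0, hφp, sub_zero, sub_zero] at this
  have := (div_neg_iff.1 this)
  rcases this with ⟨h1', h2'⟩ | ⟨h1', _⟩
  · linarith
  · linarith

lemma segEf_eq {Ω : Set E} (hopen : IsOpen Ω) (hconv : Convex ℝ Ω)
    {φ : E → ℝ} (hφpos : ∀ z ∈ Ω, 0 < φ z)
    (hφCAt : ∀ z ∈ Ω, ContDiffAt ℝ 2 φ z)
    {x y : E} (hx : x ∈ Ω) (hy : y ∈ Ω) (hxy : x ≠ y) :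
    segEf (fun z => -Real.log (φ z)) x y
      = (φ x)⁻¹ * fderiv ℝ φ x (‖y - x‖⁻¹ • (y - x))
        + (φ y)⁻¹ * (-(fderiv ℝ φ y (‖y - x‖⁻¹ • (y - x)))) := by
  have hyx : y - x ≠ 0 := sub_ne_zero.2 hxy.symm
  have hLpos : (0:ℝ) < ‖y - x‖ := norm_pos_iff.2 hyx
  set L : ℝ := ‖y - x‖ with hLdef
  set u : E := L⁻¹ • (y - x) with hudef
  set f : E → ℝ := fun z => -Real.log (φ z) with hfdef
  have hmem : ∀ s ∈ uIcc (0:ℝ) L, x + s • u ∈ Ω := by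
    intro s hs
    rw [uIcc_of_le hLpos.le] at hs
    have h1 : x + s • u = x + (s / L) • (y - x) := by
      rw [hudef, smul_smul, div_eq_mul_inv]
    rw [h1]
    exact hconv.add_smul_sub_mem hx hy
      ⟨div_nonneg hs.1 hLpos.le, div_le_one_of_le₀ hs.2 hLpos.le⟩
  have hfC : ∀ z ∈ Ω, ContDiffAt ℝ 2 f z := by
    intro z hz
    exact ((Real.contDiffAt_log.mpr (ne_of_gt (hφpos z hz))).comp z (hφCAt z hz)).neg
  have hfd : ∀ z ∈ Ω, HasFDerivAt f (-((φ z)⁻¹ • fderiv ℝ φ z)) z := by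
    intro z hz
    have h1 : HasFDerivAt (fun w => Real.log (φ w)) ((φ z)⁻¹ • fderiv ℝ φ z) z :=
      (Real.hasDerivAt_log (ne_of_gt (hφpos z hz))).comp_hasFDerivAt z
        (((hφCAt z hz).differentiableAt (by norm_num)).hasFDerivAt)
    exact h1.neg
  have hfderiv : ∀ z ∈ Ω, fderiv ℝ f z = -((φ z)⁻¹ • fderiv ℝ φ z) :=
    fun z hz => (hfd z hz).fderiv
  have hline : ∀ s : ℝ, HasDerivAt (fun s : ℝ => x + s • u) u s := by
    intro s
    simpa using ((hasDerivAt_id s).smul_const u).const_add x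
  have hh : ∀ s ∈ uIcc (0:ℝ) L,
      HasDerivAt (fun s => fderiv ℝ f (x + s • u) u)
        (iteratedFDeriv ℝ 2 f (x + s • u) ![u, u]) s := by
    intro s hs
    have hz := hmem s hs
    have hd2 : DifferentiableAt ℝ (fderiv ℝ f) (x + s • u) :=
      ((hfC _ hz).fderiv_right (m := 1) (by norm_num)).differentiableAt (by norm_num)
    have h1 : HasDerivAt (fun t : ℝ => fderiv ℝ f (x + t • u))
        (fderiv ℝ (fderiv ℝ f) (x + s • u) u) s := by
      have := hd2.hasFDerivAt.comp_hasDerivAt s (hline s)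
      simpa [Function.comp_def] using this
    have h2 := ((ContinuousLinearMap.apply ℝ ℝ u).hasFDerivAt).comp_hasDerivAt s h1
    have h3 : iteratedFDeriv ℝ 2 f (x + s • u) ![u, u]
        = fderiv ℝ (fderiv ℝ f) (x + s • u) u u := by
      rw [iteratedFDeriv_two_apply]; simp
    rw [h3]
    simpa [Function.comp_def] using h2
  have hpcont : Continuous (fun s : ℝ => x + s • u) :=
    continuous_const.add (continuous_id.smul continuous_const)
  have hFcont : ContinuousOn (iteratedFDeriv ℝ 2 f) Ω := by
    have h1 : ContDiffOn ℝ 2 f Ω := fun z hz => (hfC z hz).contDiffWithinAt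
    have h2 := h1.continuousOn_iteratedFDerivWithin (m := 2) (le_refl _) hopen.uniqueDiffOn
    exact h2.congr (iteratedFDerivWithin_of_isOpen 2 hopen).symm
  have hcontInt : ContinuousOn
      (fun s => iteratedFDeriv ℝ 2 f (x + s • u) ![u, u]) (uIcc (0:ℝ) L) := by
    have h1 : ContinuousOn (fun s => iteratedFDeriv ℝ 2 f (x + s • u)) (uIcc (0:ℝ) L) :=
      hFcont.comp hpcont.continuousOn (fun s hs => hmem s hs)
    exact (continuous_eval_const ![u, u]).comp_continuousOn h1
  have hInt : IntervalIntegrable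
      (fun s => iteratedFDeriv ℝ 2 f (x + s • u) ![u, u]) MeasureTheory.volume 0 L :=
    hcontInt.intervalIntegrable
  have hFTC := intervalIntegral.integral_eq_sub_of_hasDerivAt hh hInt
  have hseg : segEf (fun z => -Real.log (φ z)) x y
      = ∫ s in (0:ℝ)..L, iteratedFDeriv ℝ 2 f (x + s • u) ![u, u] := rfl
  rw [hseg, hFTC]
  have hx0 : x + (0:ℝ) • u = x := by simp
  have hxL : x + L • u = y := by
    rw [hudef, smul_smul, mul_inv_cancel₀ (ne_of_gt hLpos), one_smul]
    abel
  rw [hx0, hxL, hfderiv x hx, hfderiv y hy]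
  simp only [ContinuousLinearMap.neg_apply, ContinuousLinearMap.coe_smul',
    Pi.smul_apply, smul_eq_mul]
  ring


end Aux

theorem stmt12 {n : ℕ} (Ω : Set (EuclideanSpace ℝ (Fin n)))
    (hopen : IsOpen Ω) (hbd : Bornology.IsBounded Ω) (hconv : Convex ℝ Ω)
    (φ : EuclideanSpace ℝ (Fin n) → ℝ)
    (hφC2 : ContDiffOn ℝ 2 φ (closure Ω))
    (hφpos : ∀ x ∈ Ω, 0 < φ x)
    (hφ0 : ∀ x ∈ frontier Ω, φ x = 0)
    (hφν : ∀ x ∈ frontier Ω, fderiv ℝ φ x ≠ 0)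
    (hstrict : ∀ x ∈ frontier Ω, ∀ X : EuclideanSpace ℝ (Fin n), X ≠ 0 →
      fderiv ℝ φ x X = 0 → iteratedFDeriv ℝ 2 φ x ![X, X] < 0)
    (xk yk : ℕ → EuclideanSpace ℝ (Fin n))
    (hxk : ∀ k, xk k ∈ Ω) (hyk : ∀ k, yk k ∈ Ω)
    (x₀ y₀ : EuclideanSpace ℝ (Fin n))
    (hx₀ : x₀ ∈ frontier Ω) (hy₀ : y₀ ∈ frontier Ω) (hne : x₀ ≠ y₀)
    (hxlim : Filter.Tendsto xk Filter.atTop (nhds x₀))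
    (hylim : Filter.Tendsto yk Filter.atTop (nhds y₀)) :
    Filter.Tendsto (fun k => segEf (fun z => -Real.log (φ z)) (xk k) (yk k))
      Filter.atTop Filter.atTop := by
  have hxcl : x₀ ∈ closure Ω := frontier_subset_closure hx₀
  have hycl : y₀ ∈ closure Ω := frontier_subset_closure hy₀
  have hmemnhds : ∀ z ∈ Ω, closure Ω ∈ 𝓝 z := fun z hz =>
    Filter.mem_of_superset (hopen.mem_nhds hz) subset_closure
  have hφCAt : ∀ z ∈ Ω, ContDiffAt ℝ 2 φ z := fun z hz => hφC2.contDiffAt (hmemnhds z hz)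
  have hdfr : ∀ p ∈ frontier Ω, DifferentiableAt ℝ φ p := by
    intro p hp; by_contra h
    exact hφν p hp (fderiv_zero_of_not_differentiableAt h)
  have hdiffcl : ∀ z ∈ closure Ω, DifferentiableAt ℝ φ z := by
    intro z hz
    rcases (closure_eq_self_union_frontier Ω ▸ hz : z ∈ Ω ∪ frontier Ω) with h | h
    · exact (hφCAt z h).differentiableAt (by norm_num)
    · exact hdfr z h
  have hφnn : ∀ z ∈ closure Ω, 0 ≤ φ z := by
    intro z hz
    rcases (closure_eq_self_union_frontier Ω ▸ hz : z ∈ Ω ∪ frontier Ω) with h | h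
    · exact (hφpos z h).le
    · exact le_of_eq (hφ0 z h).symm
  have hUD : UniqueDiffOn ℝ (closure Ω) := by
    apply uniqueDiffOn_convex hconv.closure
    refine ⟨xk 0, interior_mono subset_closure ?_⟩
    rw [hopen.interior_eq]; exact hxk 0
  have hφcont : ContinuousOn φ (closure Ω) := hφC2.continuousOn
  have hDcont : ContinuousOn (fderiv ℝ φ) (closure Ω) := by
    have h1 := hφC2.continuousOn_fderivWithin hUD (by norm_num)
    exact h1.congr (fun z hz => ((hdiffcl z hz).fderivWithin (hUD z hz)).symm)
  have hA : 0 < fderiv ℝ φ x₀ (y₀ - x₀) :=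
    aux_deriv_pos hconv hφnn hdiffcl hstrict hx₀ (hφ0 x₀ hx₀)
      (sub_ne_zero.2 hne.symm) (by simpa using hycl)
  have hB : 0 < fderiv ℝ φ y₀ (x₀ - y₀) :=
    aux_deriv_pos hconv hφnn hdiffcl hstrict hy₀ (hφ0 y₀ hy₀)
      (sub_ne_zero.2 hne) (by simpa using hxcl)
  set L₀ : ℝ := ‖y₀ - x₀‖ with hL0
  have hL₀pos : 0 < L₀ := norm_pos_iff.2 (sub_ne_zero.2 hne.symm)
  have hd : Filter.Tendsto (fun k => yk k - xk k) Filter.atTop (𝓝 (y₀ - x₀)) :=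
    hylim.sub hxlim
  have hnorm : Filter.Tendsto (fun k => ‖yk k - xk k‖) Filter.atTop (𝓝 L₀) := hd.norm
  have hu : Filter.Tendsto (fun k => ‖yk k - xk k‖⁻¹ • (yk k - xk k)) Filter.atTop
      (𝓝 (L₀⁻¹ • (y₀ - x₀))) := (hnorm.inv₀ (ne_of_gt hL₀pos)).smul hd
  have hxin : Filter.Tendsto xk Filter.atTop (𝓝[closure Ω] x₀) :=
    tendsto_nhdsWithin_of_tendsto_nhds_of_eventually_within xk hxlim
      (Filter.Eventually.of_forall fun k => subset_closure (hxk k))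
  have hyin : Filter.Tendsto yk Filter.atTop (𝓝[closure Ω] y₀) :=
    tendsto_nhdsWithin_of_tendsto_nhds_of_eventually_within yk hylim
      (Filter.Eventually.of_forall fun k => subset_closure (hyk k))
  have hDx : Filter.Tendsto (fun k => fderiv ℝ φ (xk k)) Filter.atTop
      (𝓝 (fderiv ℝ φ x₀)) := Filter.Tendsto.comp (hDcont x₀ hxcl) hxin
  have hDy : Filter.Tendsto (fun k => fderiv ℝ φ (yk k)) Filter.atTop
      (𝓝 (fderiv ℝ φ y₀)) := Filter.Tendsto.comp (hDcont y₀ hycl) hyin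
  have hDxu : Filter.Tendsto
      (fun k => fderiv ℝ φ (xk k) (‖yk k - xk k‖⁻¹ • (yk k - xk k))) Filter.atTop
      (𝓝 (fderiv ℝ φ x₀ (L₀⁻¹ • (y₀ - x₀)))) := by
    have := (isBoundedBilinearMap_apply.continuous.tendsto
      (fderiv ℝ φ x₀, L₀⁻¹ • (y₀ - x₀))).comp (hDx.prodMk_nhds hu)
    simpa only [Function.comp_def] using this
  have hDyu : Filter.Tendsto
      (fun k => fderiv ℝ φ (yk k) (‖yk k - xk k‖⁻¹ • (yk k - xk k))) Filter.atTop
      (𝓝 (fderiv ℝ φ y₀ (L₀⁻¹ • (y₀ - x₀)))) := by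
    have := (isBoundedBilinearMap_apply.continuous.tendsto
      (fderiv ℝ φ y₀, L₀⁻¹ • (y₀ - x₀))).comp (hDy.prodMk_nhds hu)
    simpa only [Function.comp_def] using this
  have hc1 : 0 < fderiv ℝ φ x₀ (L₀⁻¹ • (y₀ - x₀)) := by
    rw [map_smul, smul_eq_mul]
    exact mul_pos (inv_pos.2 hL₀pos) hA
  have hc2 : 0 < -(fderiv ℝ φ y₀ (L₀⁻¹ • (y₀ - x₀))) := by
    rw [map_smul, smul_eq_mul]
    have h1 : fderiv ℝ φ y₀ (y₀ - x₀) = -(fderiv ℝ φ y₀ (x₀ - y₀)) := by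
      rw [← map_neg, neg_sub]
    rw [h1]
    simp only [mul_neg, neg_neg]
    exact mul_pos (inv_pos.2 hL₀pos) hB
  have hφx : Filter.Tendsto (fun k => φ (xk k)) Filter.atTop (𝓝[>] (0:ℝ)) := by
    have h1 : Filter.Tendsto (fun k => φ (xk k)) Filter.atTop (𝓝 (φ x₀)) :=
      Filter.Tendsto.comp (hφcont x₀ hxcl) hxin
    rw [hφ0 x₀ hx₀] at h1
    exact tendsto_nhdsWithin_of_tendsto_nhds_of_eventually_within _ h1
      (Filter.Eventually.of_forall fun k => hφpos _ (hxk k))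
  have hφy : Filter.Tendsto (fun k => φ (yk k)) Filter.atTop (𝓝[>] (0:ℝ)) := by
    have h1 : Filter.Tendsto (fun k => φ (yk k)) Filter.atTop (𝓝 (φ y₀)) :=
      Filter.Tendsto.comp (hφcont y₀ hycl) hyin
    rw [hφ0 y₀ hy₀] at h1
    exact tendsto_nhdsWithin_of_tendsto_nhds_of_eventually_within _ h1
      (Filter.Eventually.of_forall fun k => hφpos _ (hyk k))
  have hinvx : Filter.Tendsto (fun k => (φ (xk k))⁻¹) Filter.atTop Filter.atTop :=
    tendsto_inv_nhdsGT_zero.comp hφx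
  have hinvy : Filter.Tendsto (fun k => (φ (yk k))⁻¹) Filter.atTop Filter.atTop :=
    tendsto_inv_nhdsGT_zero.comp hφy
  have hterm1 : Filter.Tendsto
      (fun k => (φ (xk k))⁻¹ * fderiv ℝ φ (xk k) (‖yk k - xk k‖⁻¹ • (yk k - xk k)))
      Filter.atTop Filter.atTop := Filter.Tendsto.atTop_mul_pos hc1 hinvx hDxu
  have hterm2 : Filter.Tendsto
      (fun k => (φ (yk k))⁻¹ * (-(fderiv ℝ φ (yk k) (‖yk k - xk k‖⁻¹ • (yk k - xk k)))))
      Filter.atTop Filter.atTop := Filter.Tendsto.atTop_mul_pos hc2 hinvy hDyu.neg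
  have hsum := Filter.Tendsto.atTop_add_atTop hterm1 hterm2
  have hevne : ∀ᶠ k in Filter.atTop, xk k ≠ yk k := by
    have h1 : ∀ᶠ k in Filter.atTop, 0 < ‖yk k - xk k‖ := hnorm.eventually_const_lt hL₀pos
    filter_upwards [h1] with k hk
    intro h
    rw [h] at hk
    simp at hk
  refine Filter.Tendsto.congr' ?_ hsum
  filter_upwards [hevne] with k hk
  exact (segEf_eq hopen hconv hφpos hφCAt (hxk k) (hyk k) hk).symm
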